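/- arXiv:2105.06348 — 3 statements merged into one kernel-verified Lean document; each statement's English description precedes it below -/
import Mathlib

section
/- Let H₁ and H₂ be complex Hilbert spaces, p ∈ (0,2], T : H₁ → H₂ a bounded linear operator, and let (v_j)_{j∈J} and (w_k)_{k∈K} be orthonormal bases of H₁ and H₂, respectively. Then ‖T‖_{𝓛^p(H₁;H₂)}^p ≤ ∑_{j∈J} ‖T v_j‖^p ≤ ∑_{j∈J, k∈K} |⟨T v_j | w_k⟩|^p (all quantities possibly infinite). -/
open scoped ENNReal ComplexConjugate

noncomputable section

/-- The trace of a (positive) operator on a complex Hilbert space, computed as the sum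
of the diagonal inner products with respect to a (fixed) Hilbert basis, valued in `[0,∞]`. -/
def traceENNReal {H : Type*} [NormedAddCommGroup H] [InnerProductSpace ℂ H] [CompleteSpace H]
    (A : H →L[ℂ] H) : ℝ≥0∞ :=
  ∑' i : (exists_hilbertBasis ℂ H).choose,
    ENNReal.ofReal (inner (𝕜 := ℂ) (A i) (i : H)).re

/-- The Schatten `p`-norm `‖T‖_{𝓛^p} = (tr((T*T)^{p/2}))^{1/p}` of a bounded linear operator
between complex Hilbert spaces, valued in `[0,∞]`; for `p = ∞` it is the operator norm. -/
def schattenNorm {H₁ H₂ : Type*} [NormedAddCommGroup H₁] [InnerProductSpace ℂ H₁]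
    [CompleteSpace H₁] [NormedAddCommGroup H₂] [InnerProductSpace ℂ H₂] [CompleteSpace H₂]
    (p : ℝ≥0∞) (T : H₁ →L[ℂ] H₂) : ℝ≥0∞ :=
  if p = ∞ then (‖T‖₊ : ℝ≥0∞) else
    (traceENNReal (cfc (fun x : ℝ => x ^ (p.toReal / 2)) (ContinuousLinearMap.adjoint T ∘L T)))
      ^ (1 / p.toReal)

/-- Membership in the Schatten class `𝓛^p`: finite Schatten `p`-norm
(for `p = ∞`, all bounded operators). -/
def MemSchatten {H₁ H₂ : Type*} [NormedAddCommGroup H₁] [InnerProductSpace ℂ H₁]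
    [CompleteSpace H₁] [NormedAddCommGroup H₂] [InnerProductSpace ℂ H₂] [CompleteSpace H₂]
    (p : ℝ≥0∞) (T : H₁ →L[ℂ] H₂) : Prop :=
  schattenNorm p T < ∞

/-- Membership in `𝓛^p₀`: for `p < ∞` this is `𝓛^p`, for `p = ∞` the compact operators. -/
def MemSchatten0 {H₁ H₂ : Type*} [NormedAddCommGroup H₁] [InnerProductSpace ℂ H₁]
    [CompleteSpace H₁] [NormedAddCommGroup H₂] [InnerProductSpace ℂ H₂] [CompleteSpace H₂]
    (p : ℝ≥0∞) (T : H₁ →L[ℂ] H₂) : Prop :=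
  if p = ∞ then IsCompactOperator (⇑T) else MemSchatten p T

/-! ### Auxiliary lemmas -/

section Aux

set_option maxHeartbeats 1000000

/-- `(∑ aᵢ)^q ≤ ∑ aᵢ^q` in `ℝ≥0∞` for `0 < q ≤ 1`. -/
theorem aux_tsum_rpow_le {ι : Type*} (a : ι → ℝ≥0∞) {q : ℝ} (h0 : 0 < q) (h1 : q ≤ 1) :
    (∑' i, a i) ^ q ≤ ∑' i, a i ^ q := by
  rw [ENNReal.tsum_eq_iSup_sum]
  have : (⨆ s : Finset ι, ∑ i ∈ s, a i) ^ q = ⨆ s : Finset ι, (∑ i ∈ s, a i) ^ q :=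
    OrderIso.map_iSup (ENNReal.orderIsoRpow q h0) _
  rw [this]
  refine iSup_le fun s => ?_
  calc (∑ i ∈ s, a i) ^ q ≤ ∑ i ∈ s, a i ^ q := by
        classical
        induction s using Finset.induction_on with
        | empty => simp [ENNReal.zero_rpow_of_pos h0]
        | @insert a s h ih =>
          rw [Finset.sum_insert h, Finset.sum_insert h]
          exact le_trans (ENNReal.rpow_add_le_add_rpow _ _ h0.le h1) (by gcongr)
    _ ≤ ∑' i, a i ^ q := ENNReal.sum_le_tsum s

theorem aux_mul_conj_re (z : ℂ) : (z * conj z).re = ‖z‖ ^ (2:ℕ) := by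
  rw [Complex.mul_conj, Complex.ofReal_re, ← Complex.sq_norm]

theorem aux_inner_self_re {H : Type*} [NormedAddCommGroup H] [InnerProductSpace ℂ H] (x : H) :
    (inner (𝕜 := ℂ) x x).re = ‖x‖ ^ (2:ℕ) := by
  rw [← RCLike.re_to_complex, @inner_self_eq_norm_sq ℂ]

/-- Parseval's identity, `ℝ≥0∞`-valued. -/
theorem aux_parseval {H : Type*} [NormedAddCommGroup H] [InnerProductSpace ℂ H]
    [CompleteSpace H] {ι : Type*} (b : HilbertBasis ι ℂ H) (x : H) :
    ∑' i, ENNReal.ofReal (‖inner (𝕜 := ℂ) x (b i)‖ ^ (2:ℕ)) = ENNReal.ofReal (‖x‖ ^ (2:ℕ)) := by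
  have h : HasSum (fun i => ‖inner (𝕜 := ℂ) x (b i)‖ ^ (2:ℕ)) (‖x‖ ^ (2:ℕ)) := by
    have h2 := (b.hasSum_inner_mul_inner x x).mapL Complex.reCLM
    simp only [Complex.reCLM_apply] at h2
    convert h2 using 2 with i
    · rw [← inner_conj_symm x (b i), mul_comm, aux_mul_conj_re, RCLike.norm_conj]
    · rw [aux_inner_self_re]
  rw [← ENNReal.ofReal_tsum_of_nonneg (fun i => by positivity) h.summable, h.tsum_eq]

variable {H : Type*} [NormedAddCommGroup H] [InnerProductSpace ℂ H] [CompleteSpace H]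

omit [CompleteSpace H] in
theorem aux_re_inner_smul (r : ℝ) (y x : H) :
    (inner (𝕜 := ℂ) (r • y) x).re = r * (inner (𝕜 := ℂ) y x).re := by
  rw [← algebraMap_smul ℂ r y, inner_smul_left]
  simp [Complex.conj_ofReal]

/-- For a nonnegative operator `B`, `re ⟪B x, x⟫ = ‖(√B) x‖²` where `√B = cfc Real.sqrt B`. -/
theorem aux_inner_sqrt {B : H →L[ℂ] H} (hB : 0 ≤ B) (x : H) :
    (inner (𝕜 := ℂ) (B x) x).re = ‖(cfc Real.sqrt B) x‖ ^ (2:ℕ) := by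
  have hsa : IsSelfAdjoint B := .of_nonneg hB
  set S := cfc Real.sqrt B with hS
  have hSsa : IsSelfAdjoint S := cfc_predicate _ _
  have hmul : S * S = B := by
    rw [hS, ← cfc_mul _ _ B Real.continuous_sqrt.continuousOn Real.continuous_sqrt.continuousOn]
    have h7 : cfc (fun x : ℝ => Real.sqrt x * Real.sqrt x) B = cfc (fun x : ℝ => x) B :=
      cfc_congr fun t ht => Real.mul_self_sqrt (spectrum_nonneg_of_nonneg hB ht)
    rw [h7, cfc_id' ℝ B]
  have hBx : B x = S (S x) := by rw [← hmul]; rfl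
  have hinner : inner (𝕜 := ℂ) (S (S x)) x = inner (𝕜 := ℂ) (S x) (S x) := by
    calc inner (𝕜 := ℂ) (S (S x)) x
        = inner (𝕜 := ℂ) (ContinuousLinearMap.adjoint S (S x)) x := by rw [hSsa.adjoint_eq]
      _ = inner (𝕜 := ℂ) (S x) (S x) := ContinuousLinearMap.adjoint_inner_left S x (S x)
  rw [hBx, hinner, aux_inner_self_re]

theorem aux_trace_eq_double {B : H →L[ℂ] H} (hB : 0 ≤ B) {ι κ : Type*}
    (e : HilbertBasis ι ℂ H) (f : HilbertBasis κ ℂ H) :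
    ∑' i, ENNReal.ofReal (inner (𝕜 := ℂ) (B (e i)) (e i)).re
      = ∑' (i) (j), ENNReal.ofReal (‖inner (𝕜 := ℂ) ((cfc Real.sqrt B) (e i)) (f j)‖ ^ (2:ℕ)) := by
  refine tsum_congr fun i => ?_
  rw [aux_inner_sqrt hB, ← aux_parseval f ((cfc Real.sqrt B) (e i))]

/-- The diagonal trace sum of a nonnegative operator is independent of the Hilbert basis. -/
theorem aux_trace_indep {B : H →L[ℂ] H} (hB : 0 ≤ B) {ι κ : Type*}
    (e : HilbertBasis ι ℂ H) (f : HilbertBasis κ ℂ H) :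
    ∑' i, ENNReal.ofReal (inner (𝕜 := ℂ) (B (e i)) (e i)).re
      = ∑' j, ENNReal.ofReal (inner (𝕜 := ℂ) (B (f j)) (f j)).re := by
  set S := cfc Real.sqrt B with hS
  have hSsa : IsSelfAdjoint S := cfc_predicate _ _
  rw [aux_trace_eq_double hB e f, aux_trace_eq_double hB f e, ENNReal.tsum_comm]
  refine tsum_congr fun j => tsum_congr fun i => ?_
  have : ‖inner (𝕜 := ℂ) (S (e i)) (f j)‖ = ‖inner (𝕜 := ℂ) (S (f j)) (e i)‖ := by
    calc ‖inner (𝕜 := ℂ) (S (e i)) (f j)‖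
        = ‖inner (𝕜 := ℂ) (ContinuousLinearMap.adjoint S (e i)) (f j)‖ := by rw [hSsa.adjoint_eq]
      _ = ‖inner (𝕜 := ℂ) (e i) (S (f j))‖ := by
          rw [ContinuousLinearMap.adjoint_inner_left]
      _ = ‖inner (𝕜 := ℂ) (S (f j)) (e i)‖ := norm_inner_symm _ _
  rw [this]

theorem aux_traceENNReal_eq {B : H →L[ℂ] H} (hB : 0 ≤ B) {ι : Type*} (e : HilbertBasis ι ℂ H) :
    traceENNReal B = ∑' i, ENNReal.ofReal (inner (𝕜 := ℂ) (B (e i)) (e i)).re := by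
  rw [traceENNReal]
  obtain ⟨b, hb⟩ := (exists_hilbertBasis ℂ H).choose_spec
  calc ∑' i : (exists_hilbertBasis ℂ H).choose,
        ENNReal.ofReal (inner (𝕜 := ℂ) (B i) (i : H)).re
      = ∑' i, ENNReal.ofReal (inner (𝕜 := ℂ) (B (b i)) (b i)).re := by
        refine tsum_congr fun i => ?_
        rw [show ((i : H)) = b i by rw [hb]]
    _ = _ := aux_trace_indep hB b e

/-- Tangent-line bound for concave `t ↦ t^q`. -/
theorem aux_tangent {t s q : ℝ} (ht : 0 ≤ t) (hs : 0 < s) (h0 : 0 < q) (h1 : q ≤ 1) :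
    t ^ q ≤ q * s ^ (q - 1) * t + (1 - q) * s ^ q := by
  have hgm : t ^ q * s ^ (1 - q) ≤ q * t + (1 - q) * s :=
    Real.geom_mean_le_arith_mean2_weighted h0.le (by linarith) ht hs.le (by ring)
  have hpos : (0:ℝ) < s ^ (q - 1) := Real.rpow_pos_of_pos hs _
  have h2 : t ^ q * s ^ (1 - q) * s ^ (q - 1) ≤ (q * t + (1 - q) * s) * s ^ (q - 1) :=
    mul_le_mul_of_nonneg_right hgm hpos.le
  have h3 : s ^ (1 - q) * s ^ (q - 1) = 1 := by
    rw [← Real.rpow_add hs]; norm_num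
  have h4 : s * s ^ (q - 1) = s ^ q := by
    nth_rewrite 1 [← Real.rpow_one s]
    rw [← Real.rpow_add hs]; ring_nf
  calc t ^ q = t ^ q * (s ^ (1 - q) * s ^ (q - 1)) := by rw [h3, mul_one]
    _ = t ^ q * s ^ (1 - q) * s ^ (q - 1) := by ring
    _ ≤ (q * t + (1 - q) * s) * s ^ (q - 1) := h2
    _ = q * s ^ (q - 1) * t + (1 - q) * (s * s ^ (q - 1)) := by ring
    _ = q * s ^ (q - 1) * t + (1 - q) * s ^ q := by rw [h4]

theorem aux_re_inner_mono {A B : H →L[ℂ] H} (h : A ≤ B) (x : H) :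
    (inner (𝕜 := ℂ) (A x) x).re ≤ (inner (𝕜 := ℂ) (B x) x).re := by
  have h2 := ((ContinuousLinearMap.le_def A B).mp h).inner_nonneg_left x
  simp only [ContinuousLinearMap.sub_apply, inner_sub_left, map_sub,
    RCLike.re_to_complex] at h2
  have h3 := (Complex.le_def.mp h2).1
  rw [Complex.zero_re, Complex.sub_re] at h3
  linarith

/-- The key pointwise inequality `⟪A^q x, x⟫ ≤ ⟪A x, x⟫^q` for `0 ≤ A`, `0 < q ≤ 1`, `‖x‖ = 1`. -/
theorem aux_cfc_rpow_le {A : H →L[ℂ] H} (hA : 0 ≤ A) {q : ℝ} (h0 : 0 < q) (h1 : q ≤ 1)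
    {x : H} (hx : ‖x‖ = 1) :
    (inner (𝕜 := ℂ) (cfc (fun t : ℝ => t ^ q) A x) x).re
      ≤ (inner (𝕜 := ℂ) (A x) x).re ^ q := by
  have hsa : IsSelfAdjoint A := .of_nonneg hA
  have ha : 0 ≤ (inner (𝕜 := ℂ) (A x) x).re := by
    have := ((ContinuousLinearMap.nonneg_iff_isPositive A).mp hA).inner_nonneg_left x
    simpa [RCLike.re_to_complex] using (Complex.le_def.mp this).1
  have hcont : ContinuousOn (fun t : ℝ => t ^ q) (spectrum ℝ A) := fun t _ =>
    (Real.continuousAt_rpow_const t q (Or.inr h0.le)).continuousWithinAt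
  have bound : ∀ s : ℝ, 0 < s →
      (inner (𝕜 := ℂ) (cfc (fun t : ℝ => t ^ q) A x) x).re
        ≤ q * s ^ (q - 1) * (inner (𝕜 := ℂ) (A x) x).re + (1 - q) * s ^ q := by
    intro s hs
    have hmono : cfc (fun t : ℝ => t ^ q) A
        ≤ cfc (fun t : ℝ => q * s ^ (q - 1) * t + (1 - q) * s ^ q) A := by
      refine cfc_mono (fun t ht => ?_) hcont ?_
      · exact aux_tangent (spectrum_nonneg_of_nonneg hA ht) hs h0 h1
      · exact ((continuous_const.mul continuous_id).add continuous_const).continuousOn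
    have heq : cfc (fun t : ℝ => q * s ^ (q - 1) * t + (1 - q) * s ^ q) A
        = (q * s ^ (q - 1)) • A + ((1 - q) * s ^ q) • 1 := by
      rw [cfc_add A (fun t => q * s ^ (q - 1) * t) (fun _ => (1 - q) * s ^ q)
        (by fun_prop) (by fun_prop), cfc_const_mul_id _ A hsa, cfc_const _ A hsa,
        Algebra.algebraMap_eq_smul_one]
    have h5 := aux_re_inner_mono hmono x
    rw [heq] at h5
    refine h5.trans (le_of_eq ?_)
    rw [ContinuousLinearMap.add_apply, inner_add_left, Complex.add_re,
      ContinuousLinearMap.smul_apply, ContinuousLinearMap.smul_apply,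
      ContinuousLinearMap.one_apply, aux_re_inner_smul, aux_re_inner_smul,
      aux_inner_self_re, hx]
    ring
  rcases ha.eq_or_lt with heq0 | hapos
  · rw [← heq0, Real.zero_rpow h0.ne']
    rcases eq_or_lt_of_le h1 with hq1 | hq1
    · have hb := bound 1 one_pos
      rw [← heq0] at hb
      refine hb.trans (le_of_eq ?_)
      rw [hq1]; simp
    · refine le_of_forall_pos_le_add fun ε hε => ?_
      have h1q : 0 < 1 - q := by linarith
      have hspos : 0 < (ε / (1 - q)) ^ q⁻¹ := Real.rpow_pos_of_pos (by positivity) _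
      have hsq : ((ε / (1 - q)) ^ q⁻¹ : ℝ) ^ q = ε / (1 - q) :=
        Real.rpow_inv_rpow (by positivity) h0.ne'
      have hb := bound _ hspos
      rw [← heq0, hsq] at hb
      rw [zero_add]
      calc (inner (𝕜 := ℂ) (cfc (fun t : ℝ => t ^ q) A x) x).re
          ≤ q * ((ε / (1 - q)) ^ q⁻¹) ^ (q - 1) * 0 + (1 - q) * (ε / (1 - q)) := hb
        _ = ε := by field_simp; ring
  · have hb := bound _ hapos
    have h6 : (inner (𝕜 := ℂ) (A x) x).re ^ (q - 1) * (inner (𝕜 := ℂ) (A x) x).re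
        = (inner (𝕜 := ℂ) (A x) x).re ^ q := by
      nth_rewrite 2 [← Real.rpow_one (inner (𝕜 := ℂ) (A x) x).re]
      rw [← Real.rpow_add hapos]; ring_nf
    calc (inner (𝕜 := ℂ) (cfc (fun t : ℝ => t ^ q) A x) x).re
        ≤ q * (inner (𝕜 := ℂ) (A x) x).re ^ (q - 1) * (inner (𝕜 := ℂ) (A x) x).re
            + (1 - q) * (inner (𝕜 := ℂ) (A x) x).re ^ q := hb
      _ = q * ((inner (𝕜 := ℂ) (A x) x).re ^ (q - 1) * (inner (𝕜 := ℂ) (A x) x).re)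
            + (1 - q) * (inner (𝕜 := ℂ) (A x) x).re ^ q := by ring
      _ = (inner (𝕜 := ℂ) (A x) x).re ^ q := by rw [h6]; ring

theorem aux_ofReal_rpow_two (r : ℝ) (hr : 0 ≤ r) {p : ℝ} (hp : 0 < p) :
    ENNReal.ofReal (r ^ p) = ENNReal.ofReal (r ^ (2:ℕ)) ^ (p / 2) := by
  rw [ENNReal.ofReal_rpow_of_nonneg (by positivity) (by positivity)]
  congr 1
  rw [← Real.rpow_natCast r 2, ← Real.rpow_mul hr]
  rw [show ((2:ℕ):ℝ) * (p / 2) = p by push_cast; ring]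

end Aux

set_option maxHeartbeats 1000000 in
/-- For `p ∈ (0,2]`, any bounded operator `T : H₁ → H₂` and orthonormal bases
`(v_j)` of `H₁` and `(w_k)` of `H₂`,
`‖T‖_{𝓛^p}^p ≤ ∑_j ‖T v_j‖^p ≤ ∑_{j,k} |⟨T v_j | w_k⟩|^p` (possibly `∞`). -/
theorem schattenNorm_le_hilbertBasis_sums
    {H₁ H₂ : Type*} [NormedAddCommGroup H₁] [InnerProductSpace ℂ H₁] [CompleteSpace H₁]
    [NormedAddCommGroup H₂] [InnerProductSpace ℂ H₂] [CompleteSpace H₂]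
    {J K : Type*} (v : HilbertBasis J ℂ H₁) (w : HilbertBasis K ℂ H₂)
    (T : H₁ →L[ℂ] H₂) {p : ℝ} (hp0 : 0 < p) (hp2 : p ≤ 2) :
    schattenNorm (ENNReal.ofReal p) T ^ p ≤
        (∑' j, ENNReal.ofReal (‖T (v j)‖ ^ p)) ∧
      (∑' j, ENNReal.ofReal (‖T (v j)‖ ^ p)) ≤
        ∑' (j) (k), ENNReal.ofReal (‖inner (𝕜 := ℂ) (T (v j)) (w k)‖ ^ p) := by
  have hq0 : 0 < p / 2 := by linarith
  have hq1 : p / 2 ≤ 1 := by linarith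
  constructor
  · -- first inequality
    have hA : 0 ≤ ContinuousLinearMap.adjoint T ∘L T := by
      rw [ContinuousLinearMap.nonneg_iff_isPositive]
      simpa [ContinuousLinearMap.one_def] using ContinuousLinearMap.IsPositive.adjoint_conj
        (ContinuousLinearMap.isPositive_one) T
    have htoReal : (ENNReal.ofReal p).toReal = p := ENNReal.toReal_ofReal hp0.le
    have hB : 0 ≤ cfc (fun x : ℝ => x ^ (p / 2)) (ContinuousLinearMap.adjoint T ∘L T) :=
      cfc_nonneg fun t ht => Real.rpow_nonneg (spectrum_nonneg_of_nonneg hA ht) _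
    have hpow : schattenNorm (ENNReal.ofReal p) T ^ p
        = traceENNReal (cfc (fun x : ℝ => x ^ (p / 2)) (ContinuousLinearMap.adjoint T ∘L T)) := by
      rw [schattenNorm, if_neg ENNReal.ofReal_ne_top, htoReal, ← ENNReal.rpow_mul, one_div,
        inv_mul_cancel₀ hp0.ne', ENNReal.rpow_one]
    rw [hpow, aux_traceENNReal_eq hB v]
    refine ENNReal.tsum_le_tsum fun j => ?_
    have h8 := aux_cfc_rpow_le hA hq0 hq1 (v.orthonormal.1 j)
    have h9 : (inner (𝕜 := ℂ) ((ContinuousLinearMap.adjoint T ∘L T) (v j)) (v j)).re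
        = ‖T (v j)‖ ^ (2:ℕ) := by
      rw [ContinuousLinearMap.comp_apply, ContinuousLinearMap.adjoint_inner_left,
        aux_inner_self_re]
    rw [h9] at h8
    refine le_trans (ENNReal.ofReal_le_ofReal h8) (le_of_eq ?_)
    rw [aux_ofReal_rpow_two _ (norm_nonneg _) hp0,
      ENNReal.ofReal_rpow_of_nonneg (by positivity) hq0.le]
  · -- second inequality
    refine ENNReal.tsum_le_tsum fun j => ?_
    calc ENNReal.ofReal (‖T (v j)‖ ^ p)
        = ENNReal.ofReal (‖T (v j)‖ ^ (2:ℕ)) ^ (p / 2) :=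
          aux_ofReal_rpow_two _ (norm_nonneg _) hp0
      _ = (∑' k, ENNReal.ofReal (‖inner (𝕜 := ℂ) (T (v j)) (w k)‖ ^ (2:ℕ))) ^ (p / 2) := by
          rw [aux_parseval w (T (v j))]
      _ ≤ ∑' k, ENNReal.ofReal (‖inner (𝕜 := ℂ) (T (v j)) (w k)‖ ^ (2:ℕ)) ^ (p / 2) :=
          aux_tsum_rpow_le _ hq0 hq1
      _ = ∑' k, ENNReal.ofReal (‖inner (𝕜 := ℂ) (T (v j)) (w k)‖ ^ p) := by
          refine tsum_congr fun k => ?_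
          rw [aux_ofReal_rpow_two _ (norm_nonneg _) hp0]
end
end

section
/- Let H be a complex Hilbert space and let A, B : H → H be bounded positive self-adjoint operators such that ⟨A x | x⟩ ≤ ⟨B x | x⟩ for every x ∈ H. Then there exists a bounded linear operator C : H → H with ‖C‖ ≤ 1 such that A^{1/2} = C ∘ B^{1/2}, where A^{1/2} and B^{1/2} denote the positive square roots of A and B. -/
open scoped ENNReal

noncomputable section

/-- If `A` and `B` are bounded positive self-adjoint operators on a complex
Hilbert space with `⟨A x | x⟩ ≤ ⟨B x | x⟩` for every `x`, then there is a bounded operator `C`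
with `‖C‖ ≤ 1` such that `A^{1/2} = C ∘ B^{1/2}` (square roots via the continuous functional
calculus). -/
theorem sqrt_eq_contraction_comp_sqrt
    {H : Type*} [NormedAddCommGroup H] [InnerProductSpace ℂ H] [CompleteSpace H]
    (A B : H →L[ℂ] H) (hA : A.IsPositive) (hB : B.IsPositive)
    (hAB : ∀ x : H, (inner (𝕜 := ℂ) (A x) x).re ≤ (inner (𝕜 := ℂ) (B x) x).re) :
    ∃ C : H →L[ℂ] H, ‖C‖ ≤ 1 ∧ cfc Real.sqrt A = C ∘L cfc Real.sqrt B := by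
  set S := cfc Real.sqrt A with hSdef
  set T := cfc Real.sqrt B with hTdef
  -- square roots square to the original operators
  have hsq : ∀ (D : H →L[ℂ] H), D.IsPositive → cfc Real.sqrt D * cfc Real.sqrt D = D := by
    intro D hD
    have hD0 : (0 : H →L[ℂ] H) ≤ D := (ContinuousLinearMap.nonneg_iff_isPositive D).mpr hD
    rw [← cfc_mul _ _ D (Real.continuous_sqrt.continuousOn) (Real.continuous_sqrt.continuousOn)]
    have : cfc (fun x => Real.sqrt x * Real.sqrt x) D = cfc (id : ℝ → ℝ) D := by
      apply cfc_congr
      intro x hx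
      have hx0 : 0 ≤ x := spectrum_nonneg_of_nonneg hD0 hx
      simp [Real.mul_self_sqrt hx0]
    rw [this, cfc_id ℝ D]
  have hSsq : S * S = A := hsq A hA
  have hTsq : T * T = B := hsq B hB
  have hSsa : IsSelfAdjoint S := cfc_predicate Real.sqrt A
  have hTsa : IsSelfAdjoint T := cfc_predicate Real.sqrt B
  have hSsymm := (ContinuousLinearMap.isSelfAdjoint_iff_isSymmetric).mp hSsa
  have hTsymm := (ContinuousLinearMap.isSelfAdjoint_iff_isSymmetric).mp hTsa
  -- the key norm inequality
  have hnormsq : ∀ (R : H →L[ℂ] H), R.IsSymmetric → ∀ x : H,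
      ‖R x‖ ^ 2 = (inner (𝕜 := ℂ) ((R * R) x) x).re := by
    intro R hR x
    have : (inner (𝕜 := ℂ) ((R * R) x) x) = inner (𝕜 := ℂ) (R x) (R x) := by
      simpa using hR (R x) x
    rw [this]
    exact (inner_self_eq_norm_sq (𝕜 := ℂ) (R x)).symm
  have key : ∀ x : H, ‖S x‖ ≤ ‖T x‖ := by
    intro x
    have h1 : ‖S x‖ ^ 2 ≤ ‖T x‖ ^ 2 := by
      rw [hnormsq S hSsymm x, hnormsq T hTsymm x, hSsq, hTsq]
      exact hAB x
    nlinarith [norm_nonneg (S x), norm_nonneg (T x)]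
  -- factor `S` through the range of `T`
  set Tl := T.toLinearMap with hTl
  set W : Submodule ℂ H := LinearMap.range Tl with hW
  have hker : LinearMap.ker Tl ≤ LinearMap.ker S.toLinearMap := by
    intro x hx
    have hx' : T x = 0 := hx
    have : ‖S x‖ ≤ 0 := by simpa [hx'] using key x
    simpa [LinearMap.mem_ker] using norm_le_zero_iff.mp this
  set f₀ : (H ⧸ LinearMap.ker Tl) →ₗ[ℂ] H := (LinearMap.ker Tl).liftQ S.toLinearMap hker with hf₀
  set e := Tl.quotKerEquivRange with he
  set f : W →ₗ[ℂ] H := f₀ ∘ₗ e.symm.toLinearMap with hf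
  have hfT : ∀ (x : H) (hx : Tl x ∈ W), f ⟨Tl x, hx⟩ = S x := by
    intro x hx
    have h1 : (⟨Tl x, hx⟩ : W) = e (Submodule.Quotient.mk x) := by
      apply Subtype.ext
      simp [he, Tl.quotKerEquivRange_apply_mk]
    rw [hf]
    simp only [LinearMap.comp_apply, h1, LinearEquiv.coe_toLinearMap,
      LinearEquiv.symm_apply_apply]
    rfl
  have hfbound : ∀ z : W, ‖f z‖ ≤ 1 * ‖z‖ := by
    rintro ⟨z, hz⟩
    obtain ⟨x, rfl⟩ := hz
    rw [hfT x ⟨x, rfl⟩, one_mul]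
    exact key x
  set fL : W →L[ℂ] H := f.mkContinuous 1 hfbound with hfL
  have hfLnorm : ‖fL‖ ≤ 1 := f.mkContinuous_norm_le zero_le_one hfbound
  -- the closure of the range of `T`
  set K : Submodule ℂ H := W.topologicalClosure with hK
  have hWK : W ≤ K := W.le_topologicalClosure
  -- the inclusion of `W` into `K`
  set ι : W →L[ℂ] K :=
    { toLinearMap := Submodule.inclusion hWK
      cont := Continuous.subtype_mk continuous_subtype_val _ } with hι
  have hιapp : ∀ z : W, (ι z : H) = (z : H) := fun _ => rfl
  have hιiso : Isometry ι := Isometry.of_dist_eq fun _ _ => rfl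
  have hιdense : DenseRange ι := by
    intro y
    rw [Metric.mem_closure_iff]
    intro ε hε
    have hy : (y : H) ∈ closure (W : Set H) := y.2
    obtain ⟨w, hw, hd⟩ := Metric.mem_closure_iff.mp hy ε hε
    exact ⟨ι ⟨w, hw⟩, Set.mem_range_self _, by simpa [Subtype.dist_eq, hιapp] using hd⟩
  have hιui : IsUniformInducing ι := hιiso.isUniformInducing
  set g : K →L[ℂ] H := fL.extend ι with hg
  have hgnorm : ‖g‖ ≤ 1 := by
    have hb : ∀ z : W, ‖z‖ ≤ (1 : NNReal) * ‖ι z‖ := by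
      intro z
      simp [hιiso.norm_map_of_map_zero (map_zero ι)]
    have h := fL.opNorm_extend_le hιdense (h_e := hb)
    calc ‖fL.extend ι‖
        ≤ (1 : NNReal) * ‖fL‖ := h
      _ ≤ 1 := by simpa using hfLnorm
  -- assemble the final operator
  refine ⟨g ∘L Submodule.orthogonalProjectionOnto K, ?_, ?_⟩
  · calc ‖g ∘L Submodule.orthogonalProjectionOnto K‖ ≤ ‖g‖ * ‖Submodule.orthogonalProjectionOnto K‖ :=
          ContinuousLinearMap.opNorm_comp_le _ _
      _ ≤ 1 * 1 := mul_le_mul hgnorm (Submodule.orthogonalProjectionOnto_norm_le K) (norm_nonneg (Submodule.orthogonalProjectionOnto K)) zero_le_one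
      _ = 1 := one_mul 1
  · ext x
    have hmemW : T x ∈ W := ⟨x, rfl⟩
    have hmemK : T x ∈ K := hWK hmemW
    have hP : Submodule.orthogonalProjectionOnto K (T x) = ⟨T x, hmemK⟩ :=
      Submodule.orthogonalProjectionOnto_mem_subspace_eq_self (⟨T x, hmemK⟩ : K)
    have hι' : (⟨T x, hmemK⟩ : K) = ι ⟨T x, hmemW⟩ := Subtype.ext rfl
    calc S x = f ⟨T x, hmemW⟩ := (hfT x hmemW).symm
      _ = fL ⟨T x, hmemW⟩ := rfl
      _ = g (ι ⟨T x, hmemW⟩) := (fL.extend_eq hιdense hιui _).symm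
      _ = (g ∘L Submodule.orthogonalProjectionOnto K) (T x) := by
          rw [ContinuousLinearMap.comp_apply, hP, hι']
end
end

section
/- Let J and K be countable index sets, let p₁, q₁, p₂, q₂ ∈ (0,∞], and set p₃ := ((1/p₂ − 1/p₁)₊)^{-1} and q₃ := ((1/q₂ − 1/q₁)₊)^{-1} (so p₃ = ∞ when p₁ ≤ p₂, and 1/p₃ = 1/p₂ − 1/p₁ otherwise, similarly for q₃). If μ ∈ ℓ^{p₃,q₃}(J,K), then the pointwise multiplication operator M_μ : λ ↦ μ·λ maps ℓ^{p₁,q₁}(J,K) into ℓ^{p₂,q₂}(J,K) with ‖μ·λ‖_{ℓ^{p₂,q₂}(J,K)} ≤ ‖μ‖_{ℓ^{p₃,q₃}(J,K)} ‖λ‖_{ℓ^{p₁,q₁}(J,K)}; if moreover μ ∈ ℓ^{p₃,q₃}₀(J,K), then M_μ : ℓ^{p₁,q₁}(J,K) → ℓ^{p₂,q₂}(J,K) is a compact linear operator, being a limit in operator norm of the finite-rank operators λ ↦ (χ_Y μ)·λ with Y a finite subset of J×K. -/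
open scoped ENNReal

noncomputable section

/-- The `ℓ^p` norm (valued in `[0,∞]`) of a `[0,∞]`-valued family, `p ∈ (0,∞]`. -/
def ennLpNorm (p : ℝ≥0∞) {ι : Type*} (f : ι → ℝ≥0∞) : ℝ≥0∞ :=
  if p = ∞ then ⨆ i, f i else (∑' i, f i ^ p.toReal) ^ (1 / p.toReal)

/-- The mixed `ℓ^{p,q}(J,K)` (quasi-)norm of `λ : J × K → ℂ`: the `ℓ^q` norm over `k ∈ K` of
the `ℓ^p` norms over `j ∈ J`. -/
def mixedLpqNorm (p q : ℝ≥0∞) {J K : Type*} (l : J × K → ℂ) : ℝ≥0∞ :=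
  ennLpNorm q fun k => ennLpNorm p fun j => (‖l (j, k)‖₊ : ℝ≥0∞)

/-- Membership in `ℓ^{p,q}(J,K)`. -/
def MemLpq (p q : ℝ≥0∞) {J K : Type*} (l : J × K → ℂ) : Prop :=
  mixedLpqNorm p q l < ∞

/-- Membership in `ℓ^{p,q}₀(J,K)`: the closure in `ℓ^{p,q}(J,K)` of the finitely supported
functions. -/
def MemLpq0 (p q : ℝ≥0∞) {J K : Type*} (l : J × K → ℂ) : Prop :=
  MemLpq p q l ∧ ∀ ε : ℝ≥0∞, 0 < ε → ∃ l₀ : J × K → ℂ,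
    (Function.support l₀).Finite ∧ mixedLpqNorm p q (l - l₀) < ε

open Classical

section Aux

open MeasureTheory

lemma tsum_mul_le_holder {ι : Type*} {a b : ℝ} (hab : a.HolderConjugate b) (f g : ι → ℝ≥0∞) :
    ∑' i, f i * g i ≤ (∑' i, f i ^ a) ^ (1/a) * (∑' i, g i ^ b) ^ (1/b) := by
  letI : MeasurableSpace ι := ⊤
  haveI : MeasurableSingletonClass ι := ⟨fun _ => trivial⟩
  have hfm : Measurable f := fun s _ => trivial
  have hgm : Measurable g := fun s _ => trivial
  have hf : AEMeasurable f Measure.count := hfm.aemeasurable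
  have hg : AEMeasurable g Measure.count := hgm.aemeasurable
  simpa [MeasureTheory.lintegral_count] using
    ENNReal.lintegral_mul_le_Lp_mul_Lq Measure.count hab hf hg

lemma tsum_rpow_le_rpow_tsum {ι : Type*} (h : ι → ℝ≥0∞) {a : ℝ} (ha : 1 ≤ a) :
    ∑' i, h i ^ a ≤ (∑' i, h i) ^ a := by
  set S := ∑' i, h i with hS
  by_cases htop : S = ∞
  · rw [htop, ENNReal.top_rpow_of_pos (by linarith)]; exact le_top
  by_cases h0 : S = 0
  · have : ∀ i, h i = 0 := by
      intro i
      exact le_antisymm (h0 ▸ ENNReal.le_tsum i) bot_le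
    simp [this, ENNReal.zero_rpow_of_pos (by linarith : (0:ℝ) < a)]
  have key : ∀ i, h i ^ a ≤ S ^ (a - 1) * h i := by
    intro i
    by_cases hi : h i = 0
    · simp [hi, ENNReal.zero_rpow_of_pos (by linarith : (0:ℝ) < a)]
    have hitop : h i ≠ ∞ := fun e => htop (by
      refine top_unique ?_; rw [← e]; exact ENNReal.le_tsum i)
    calc h i ^ a = h i ^ ((a - 1) + 1) := by ring_nf
      _ = h i ^ (a - 1) * h i := by rw [ENNReal.rpow_add _ _ hi hitop, ENNReal.rpow_one]
      _ ≤ S ^ (a - 1) * h i :=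
          mul_le_mul_left (ENNReal.rpow_le_rpow (ENNReal.le_tsum i) (by linarith)) _
  calc ∑' i, h i ^ a ≤ ∑' i, S ^ (a-1) * h i := ENNReal.tsum_le_tsum key
    _ = S ^ (a-1) * S := by rw [ENNReal.tsum_mul_left]
    _ = S ^ a := by
        conv_lhs => rw [show S ^ (a-1) * S = S ^ ((a-1)+1) by
          rw [ENNReal.rpow_add _ _ h0 htop, ENNReal.rpow_one]]
        ring_nf

variable {ι : Type*} {f g : ι → ℝ≥0∞}

lemma ennLpNorm_mono (p : ℝ≥0∞) (h : ∀ i, f i ≤ g i) : ennLpNorm p f ≤ ennLpNorm p g := by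
  unfold ennLpNorm
  split
  · exact iSup_mono h
  · exact ENNReal.rpow_le_rpow
      (ENNReal.tsum_le_tsum fun i => ENNReal.rpow_le_rpow (h i) ENNReal.toReal_nonneg)
      (by positivity)

lemma le_ennLpNorm (p : ℝ≥0∞) (hp : 0 < p) (i : ι) : f i ≤ ennLpNorm p f := by
  unfold ennLpNorm
  split
  · exact le_iSup f i
  · rename_i hptop
    have hpt : 0 < p.toReal := ENNReal.toReal_pos hp.ne' hptop
    calc f i = (f i ^ p.toReal) ^ (1 / p.toReal) := by
          rw [← ENNReal.rpow_mul, mul_one_div, div_self hpt.ne', ENNReal.rpow_one]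
      _ ≤ _ := ENNReal.rpow_le_rpow (ENNReal.le_tsum i) (by positivity)

lemma ennLpNorm_anti {p q : ℝ≥0∞} (hp : 0 < p) (hpq : p ≤ q) :
    ennLpNorm q f ≤ ennLpNorm p f := by
  by_cases hq : q = ∞
  · rw [hq]
    have : ennLpNorm ⊤ f = ⨆ i, f i := if_pos rfl
    rw [this]
    exact iSup_le fun i => le_ennLpNorm p hp i
  have hptop : p ≠ ∞ := fun e => hq (top_unique (e ▸ hpq))
  have hpt : 0 < p.toReal := ENNReal.toReal_pos hp.ne' hptop
  have hqt : 0 < q.toReal := lt_of_lt_of_le hpt (ENNReal.toReal_le_toReal hptop hq |>.2 hpq)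
  have ha : 1 ≤ q.toReal / p.toReal :=
    (one_le_div hpt).2 ((ENNReal.toReal_le_toReal hptop hq).2 hpq)
  simp only [ennLpNorm, if_neg hq, if_neg hptop]
  have key : ∑' i, f i ^ q.toReal ≤ (∑' i, f i ^ p.toReal) ^ (q.toReal / p.toReal) := by
    calc ∑' i, f i ^ q.toReal = ∑' i, (f i ^ p.toReal) ^ (q.toReal / p.toReal) := by
          congr 1; ext i
          rw [← ENNReal.rpow_mul, mul_div_cancel₀ _ hpt.ne']
      _ ≤ _ := tsum_rpow_le_rpow_tsum _ ha
  calc (∑' i, f i ^ q.toReal) ^ (1 / q.toReal)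
      ≤ ((∑' i, f i ^ p.toReal) ^ (q.toReal / p.toReal)) ^ (1 / q.toReal) :=
        ENNReal.rpow_le_rpow key (by positivity)
    _ = (∑' i, f i ^ p.toReal) ^ (1 / p.toReal) := by
        rw [← ENNReal.rpow_mul]
        congr 1
        field_simp

lemma ennLpNorm_top_mul (p : ℝ≥0∞) (hp : 0 < p) (f g : ι → ℝ≥0∞) :
    ennLpNorm p (fun i => f i * g i) ≤ (⨆ i, f i) * ennLpNorm p g := by
  unfold ennLpNorm
  split
  · exact iSup_le fun i => mul_le_mul' (le_iSup f i) (le_iSup g i)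
  · rename_i hptop
    have hc : 0 < p.toReal := ENNReal.toReal_pos hp.ne' hptop
    calc (∑' i, (f i * g i) ^ p.toReal) ^ (1 / p.toReal)
        ≤ (∑' i, (⨆ j, f j) ^ p.toReal * g i ^ p.toReal) ^ (1 / p.toReal) := by
          refine ENNReal.rpow_le_rpow (ENNReal.tsum_le_tsum fun i => ?_) (by positivity)
          rw [← ENNReal.mul_rpow_of_nonneg _ _ hc.le]
          exact ENNReal.rpow_le_rpow (mul_le_mul_left (le_iSup f i) _) hc.le
      _ = ((⨆ j, f j) ^ p.toReal * ∑' i, g i ^ p.toReal) ^ (1 / p.toReal) := by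
          rw [ENNReal.tsum_mul_left]
      _ = (⨆ j, f j) * (∑' i, g i ^ p.toReal) ^ (1 / p.toReal) := by
          rw [ENNReal.mul_rpow_of_nonneg _ _ (by positivity), ← ENNReal.rpow_mul,
            mul_one_div, div_self hc.ne', ENNReal.rpow_one]

lemma ennLpNorm_mul_le {p₁ p₂ : ℝ≥0∞} (hp₁ : 0 < p₁) (hp₂ : 0 < p₂) (f g : ι → ℝ≥0∞) :
    ennLpNorm p₂ (fun i => f i * g i) ≤ ennLpNorm (1/p₂ - 1/p₁)⁻¹ f * ennLpNorm p₁ g := by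
  by_cases hle : p₁ ≤ p₂
  · have hr : (1/p₂ - 1/p₁)⁻¹ = ∞ := by
      rw [ENNReal.inv_eq_top, tsub_eq_zero_iff_le]
      simp only [one_div]
      exact ENNReal.inv_le_inv.2 hle
    rw [hr]
    have h1 : ennLpNorm ∞ f = ⨆ i, f i := if_pos rfl
    rw [h1]
    exact le_trans (ennLpNorm_top_mul p₂ hp₂ f g)
      (mul_le_mul_right (ennLpNorm_anti hp₁ hle) _)
  push_neg at hle
  have hp₂top : p₂ ≠ ∞ := fun e => absurd (e ▸ le_top) hle.not_ge
  by_cases hp₁top : p₁ = ∞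
  · have hr : (1/p₂ - 1/p₁)⁻¹ = p₂ := by
      rw [hp₁top]; simp [one_div]
    rw [hr, hp₁top]
    have h1 : ennLpNorm ∞ g = ⨆ i, g i := if_pos rfl
    rw [h1]
    calc ennLpNorm p₂ (fun i => f i * g i) = ennLpNorm p₂ (fun i => g i * f i) := by
          simp only [mul_comm]
      _ ≤ (⨆ i, g i) * ennLpNorm p₂ f := ennLpNorm_top_mul p₂ hp₂ g f
      _ = ennLpNorm p₂ f * ⨆ i, g i := mul_comm _ _
  -- main case : 0 < p₂ < p₁ < ∞
  set c₁ := p₁.toReal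
  set c₂ := p₂.toReal
  have hc₁ : 0 < c₁ := ENNReal.toReal_pos hp₁.ne' hp₁top
  have hc₂ : 0 < c₂ := ENNReal.toReal_pos hp₂.ne' hp₂top
  have hc₂₁ : c₂ < c₁ := by
    have := ENNReal.toReal_lt_toReal hp₂top hp₁top
    exact this.2 hle
  have hsub_pos : 0 < 1/p₂ - 1/p₁ := by
    rw [tsub_pos_iff_lt]
    simp only [one_div]
    exact ENNReal.inv_lt_inv.2 hle
  have hsub_ne_top : 1/p₂ - 1/p₁ ≠ ∞ := by
    refine ne_top_of_le_ne_top ?_ tsub_le_self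
    simp [one_div, ENNReal.inv_ne_top, hp₂.ne']
  set r := (1/p₂ - 1/p₁)⁻¹ with hr
  have hr0 : r ≠ 0 := ENNReal.inv_ne_zero.2 hsub_ne_top
  have hrtop : r ≠ ∞ := ENNReal.inv_ne_top.2 hsub_pos.ne'
  set cr := r.toReal
  have hcr : 0 < cr := ENNReal.toReal_pos hr0 hrtop
  have hcr_eq : 1/cr = 1/c₂ - 1/c₁ := by
    have h1 : cr = ((1/p₂ - 1/p₁).toReal)⁻¹ := by
      show r.toReal = _
      rw [hr, ENNReal.toReal_inv]
    have h2 : (1/p₂ - 1/p₁).toReal = 1/c₂ - 1/c₁ := by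
      rw [ENNReal.toReal_sub_of_le (by simp only [one_div]; exact ENNReal.inv_le_inv.2 hle.le)
        (by simp [one_div, ENNReal.inv_ne_top, hp₂.ne'])]
      simp [one_div, ENNReal.toReal_inv, c₁, c₂]
    rw [h1, h2, one_div, inv_inv]
  have hab : (cr/c₂).HolderConjugate (c₁/c₂) := by
    rw [Real.holderConjugate_iff]
    constructor
    · rw [lt_div_iff₀ hc₂, one_mul]
      by_contra hcon
      push_neg at hcon
      have : 1/cr ≥ 1/c₂ := one_div_le_one_div_of_le hcr hcon
      rw [hcr_eq] at this
      nlinarith [one_div_pos.2 hc₁]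
    · have h2 : c₂/cr = 1 - c₂/c₁ := by
        rw [div_eq_mul_one_div, hcr_eq]
        field_simp
      rw [inv_div, inv_div, h2]
      ring
  have hennf : ennLpNorm p₂ (fun i => f i * g i)
      = (∑' i, (f i * g i) ^ c₂) ^ (1/c₂) := if_neg hp₂top
  have hennr : ennLpNorm r f = (∑' i, f i ^ cr) ^ (1/cr) := if_neg hrtop
  have henng : ennLpNorm p₁ g = (∑' i, g i ^ c₁) ^ (1/c₁) := if_neg hp₁top
  rw [hennf, hennr, henng]
  have key : ∑' i, (f i * g i) ^ c₂
      ≤ ((∑' i, f i ^ cr) ^ (c₂/cr)) * ((∑' i, g i ^ c₁) ^ (c₂/c₁)) := by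
    calc ∑' i, (f i * g i) ^ c₂ = ∑' i, f i ^ c₂ * g i ^ c₂ := by
          congr 1; ext i; rw [ENNReal.mul_rpow_of_nonneg _ _ hc₂.le]
      _ ≤ (∑' i, (f i ^ c₂) ^ (cr/c₂)) ^ (1/(cr/c₂))
            * (∑' i, (g i ^ c₂) ^ (c₁/c₂)) ^ (1/(c₁/c₂)) :=
          tsum_mul_le_holder hab _ _
      _ = ((∑' i, f i ^ cr) ^ (c₂/cr)) * ((∑' i, g i ^ c₁) ^ (c₂/c₁)) := by
          rw [one_div_div, one_div_div]
          congr 2 <;> [skip; skip] <;> (first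
            | (congr 1; ext i; rw [← ENNReal.rpow_mul]; congr 1; field_simp))
  calc (∑' i, (f i * g i) ^ c₂) ^ (1/c₂)
      ≤ (((∑' i, f i ^ cr) ^ (c₂/cr)) * ((∑' i, g i ^ c₁) ^ (c₂/c₁))) ^ (1/c₂) :=
        ENNReal.rpow_le_rpow key (by positivity)
    _ = (∑' i, f i ^ cr) ^ (1/cr) * (∑' i, g i ^ c₁) ^ (1/c₁) := by
        rw [ENNReal.mul_rpow_of_nonneg _ _ (by positivity), ← ENNReal.rpow_mul,
          ← ENNReal.rpow_mul]
        congr 1 <;> (congr 1; field_simp)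

lemma mixedLpqNorm_mono (p q : ℝ≥0∞) {J K : Type*} {f g : J × K → ℂ}
    (h : ∀ x, ‖f x‖₊ ≤ ‖g x‖₊) : mixedLpqNorm p q f ≤ mixedLpqNorm p q g :=
  ennLpNorm_mono q fun k => ennLpNorm_mono p fun j => ENNReal.coe_le_coe.2 (h (j, k))

end Aux

/-- Let `J, K` be countable, `p₁, q₁, p₂, q₂ ∈ (0,∞]`, and let
`p₃ = ((1/p₂ − 1/p₁)₊)⁻¹`, `q₃ = ((1/q₂ − 1/q₁)₊)⁻¹`. If `μ ∈ ℓ^{p₃,q₃}(J,K)`, then pointwise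
multiplication by `μ` maps `ℓ^{p₁,q₁}(J,K)` into `ℓ^{p₂,q₂}(J,K)` with
`‖μ·λ‖_{ℓ^{p₂,q₂}} ≤ ‖μ‖_{ℓ^{p₃,q₃}} ‖λ‖_{ℓ^{p₁,q₁}}`; and if moreover `μ ∈ ℓ^{p₃,q₃}₀(J,K)`,
then `M_μ` is a compact operator, being the operator-norm limit of its finite-rank truncations
`λ ↦ (χ_Y μ)·λ` over finite sets `Y ⊆ J × K`. -/
theorem mixed_multiplier_bounded_and_compact
    {J K : Type*} [Countable J] [Countable K]
    {p₁ q₁ p₂ q₂ : ℝ≥0∞} (hp₁ : 0 < p₁) (hq₁ : 0 < q₁) (hp₂ : 0 < p₂) (hq₂ : 0 < q₂)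
    (μ : J × K → ℂ) (hμ : MemLpq (1 / p₂ - 1 / p₁)⁻¹ (1 / q₂ - 1 / q₁)⁻¹ μ) :
    (∀ l : J × K → ℂ,
      mixedLpqNorm p₂ q₂ (fun x => μ x * l x) ≤
        mixedLpqNorm (1 / p₂ - 1 / p₁)⁻¹ (1 / q₂ - 1 / q₁)⁻¹ μ * mixedLpqNorm p₁ q₁ l) ∧
    (∀ l : J × K → ℂ, MemLpq p₁ q₁ l → MemLpq p₂ q₂ (fun x => μ x * l x)) ∧
    (MemLpq0 (1 / p₂ - 1 / p₁)⁻¹ (1 / q₂ - 1 / q₁)⁻¹ μ →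
      ∀ ε : ℝ≥0∞, 0 < ε → ∃ Y : Finset (J × K),
        ∀ l : J × K → ℂ,
          mixedLpqNorm p₂ q₂ (fun x => (if x ∈ Y then 0 else μ x) * l x) ≤
            ε * mixedLpqNorm p₁ q₁ l) := by
  have hmain : ∀ ν l : J × K → ℂ,
      mixedLpqNorm p₂ q₂ (fun x => ν x * l x) ≤
        mixedLpqNorm (1 / p₂ - 1 / p₁)⁻¹ (1 / q₂ - 1 / q₁)⁻¹ ν * mixedLpqNorm p₁ q₁ l := by
    intro ν l
    have step1 : ∀ k, ennLpNorm p₂ (fun j => (‖(fun x => ν x * l x) (j, k)‖₊ : ℝ≥0∞))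
        ≤ ennLpNorm (1 / p₂ - 1 / p₁)⁻¹ (fun j => (‖ν (j, k)‖₊ : ℝ≥0∞))
          * ennLpNorm p₁ (fun j => (‖l (j, k)‖₊ : ℝ≥0∞)) := by
      intro k
      have hptw : (fun j => (‖(fun x => ν x * l x) (j, k)‖₊ : ℝ≥0∞))
          = fun j => (‖ν (j, k)‖₊ : ℝ≥0∞) * (‖l (j, k)‖₊ : ℝ≥0∞) := by
        funext j
        simp [nnnorm_mul]
      rw [hptw]
      exact ennLpNorm_mul_le hp₁ hp₂ _ _
    calc mixedLpqNorm p₂ q₂ (fun x => ν x * l x)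
        ≤ ennLpNorm q₂ (fun k =>
            ennLpNorm (1 / p₂ - 1 / p₁)⁻¹ (fun j => (‖ν (j, k)‖₊ : ℝ≥0∞))
              * ennLpNorm p₁ (fun j => (‖l (j, k)‖₊ : ℝ≥0∞))) :=
          ennLpNorm_mono q₂ step1
      _ ≤ _ := ennLpNorm_mul_le hq₁ hq₂ _ _
  refine ⟨hmain μ, fun l hl => ?_, fun hμ0 ε hε => ?_⟩
  · exact lt_of_le_of_lt (hmain μ l) (ENNReal.mul_lt_top hμ hl)
  · obtain ⟨l₀, hl₀fin, hl₀⟩ := hμ0.2 ε hε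
    refine ⟨hl₀fin.toFinset, fun l => ?_⟩
    have hptw : ∀ x : J × K,
        ‖(if x ∈ hl₀fin.toFinset then 0 else μ x)‖₊ ≤ ‖(μ - l₀) x‖₊ := by
      intro x
      by_cases hx : x ∈ hl₀fin.toFinset
      · simp [hx]
      · have hx0 : l₀ x = 0 := by
          by_contra h0
          exact hx (hl₀fin.mem_toFinset.2 h0)
        simp [hx, Pi.sub_apply, hx0]
    calc mixedLpqNorm p₂ q₂ (fun x => (if x ∈ hl₀fin.toFinset then 0 else μ x) * l x)
        ≤ mixedLpqNorm (1 / p₂ - 1 / p₁)⁻¹ (1 / q₂ - 1 / q₁)⁻¹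
            (fun x => if x ∈ hl₀fin.toFinset then 0 else μ x) * mixedLpqNorm p₁ q₁ l :=
          hmain _ l
      _ ≤ mixedLpqNorm (1 / p₂ - 1 / p₁)⁻¹ (1 / q₂ - 1 / q₁)⁻¹ (μ - l₀)
            * mixedLpqNorm p₁ q₁ l :=
          mul_le_mul_left (mixedLpqNorm_mono _ _ hptw) _
      _ ≤ ε * mixedLpqNorm p₁ q₁ l := mul_le_mul_left hl₀.le _
end
end
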